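/- A Δ-generated topological space is connected if and only if it is path-connected. -/

import Mathlib

/-- A topological space is Δ-generated if its topology is final with respect to all
continuous maps from the standard topological simplices `Δⁿ` into it. -/
def IsDeltaGenerated (X : Type*) [TopologicalSpace X] : Prop :=
  ∀ u : Set X, IsOpen u ↔
    ∀ (n : ℕ) (f : C((stdSimplex ℝ (Fin (n + 1)) : Set (Fin (n + 1) → ℝ)), X)),
      IsOpen (f ⁻¹' u)

lemma stdSimplex_joined {n : ℕ}
    (x y : (stdSimplex ℝ (Fin (n + 1)) : Set (Fin (n + 1) → ℝ))) : Joined x y := by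
  have hconv := (convex_stdSimplex ℝ (Fin (n + 1))).isPathConnected
    ⟨x, x.2⟩
  have := hconv.joinedIn x x.2 y y.2
  exact this.joined_subtype

/-- A Δ-generated topological space is connected iff it is path-connected. -/
theorem deltaGenerated_connected_iff_pathConnected (X : Type*) [TopologicalSpace X]
    (hX : IsDeltaGenerated X) : ConnectedSpace X ↔ PathConnectedSpace X := by
  constructor
  · intro hc
    have key : ∀ x : X, IsOpen (pathComponent x) ∧ IsOpen (pathComponent x)ᶜ := by
      intro x
      have triv : ∀ (n : ℕ)
          (f : C((stdSimplex ℝ (Fin (n + 1)) : Set (Fin (n + 1) → ℝ)), X)),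
          f ⁻¹' pathComponent x = Set.univ ∨ f ⁻¹' pathComponent x = ∅ := by
        intro n f
        by_cases h : ∃ y, f y ∈ pathComponent x
        · left
          obtain ⟨y, hy⟩ := h
          ext z
          simp only [Set.mem_preimage, Set.mem_univ, iff_true]
          exact hy.trans ⟨(stdSimplex_joined y z).somePath.map f.continuous⟩
        · right
          ext z
          simp only [Set.mem_preimage, Set.mem_empty_iff_false, iff_false]
          exact fun hz => h ⟨z, hz⟩
      constructor
      · rw [hX]
        intro n f
        rcases triv n f with h | h <;> rw [h] <;> simp
      · rw [hX]
        intro n f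
        rw [Set.preimage_compl]
        rcases triv n f with h | h <;> rw [h] <;> simp
    have hne : Nonempty X := hc.toNonempty
    obtain ⟨x₀⟩ := hne
    have hcl : IsClosed (pathComponent x₀) := by
      have := ((key x₀).2).isClosed_compl
      rwa [compl_compl] at this
    have huniv : pathComponent x₀ = Set.univ :=
      IsClopen.eq_univ ⟨hcl, (key x₀).1⟩ ⟨x₀, mem_pathComponent_self x₀⟩
    refine ⟨⟨x₀⟩, fun x y => ?_⟩
    have hx : Joined x₀ x := by
      have : x ∈ pathComponent x₀ := huniv ▸ Set.mem_univ x
      exact this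
    have hy : Joined x₀ y := by
      have : y ∈ pathComponent x₀ := huniv ▸ Set.mem_univ y
      exact this
    exact hx.symm.trans hy
  · intro h
    exact h.connectedSpace
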